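/- Let v ∈ S_n avoid the pattern 2143. Then Γ([v,w₀]) contains no 3×3 square region if and only if v avoids the patterns 123, 1432, and 3214. -/

import Mathlib

open Equiv Finset
open scoped Classical

/-- Bruhat order on the symmetric group on `Fin n`, via the rank-matrix
characterization: `v ≤ w` iff every northeast corner count of `v` is at most
that of `w`. -/
def bruhatLE {n : ℕ} (v w : Equiv.Perm (Fin n)) : Prop :=
  ∀ i j : Fin n,
    (Finset.univ.filter fun k => k ≤ i ∧ j ≤ v k).card ≤
      (Finset.univ.filter fun k => k ≤ i ∧ j ≤ w k).card

/-- Coxeter length = number of inversions. -/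
def len {n : ℕ} (v : Equiv.Perm (Fin n)) : ℕ :=
  (Finset.univ.filter fun p : Fin n × Fin n => p.1 < p.2 ∧ v p.2 < v p.1).card

/-- The graph of the Bruhat interval `[v, w]`. -/
def grInt {n : ℕ} (v w : Equiv.Perm (Fin n)) : Set (Fin n × Fin n) :=
  {p | ∃ u : Equiv.Perm (Fin n), bruhatLE v u ∧ bruhatLE u w ∧ u p.1 = p.2}

/-- `Q` contains an `m × m` square region. -/
def hasSquare {n : ℕ} (Q : Set (Fin n × Fin n)) (m : ℕ) : Prop :=
  ∃ r c : ℕ, r + m ≤ n ∧ c + m ≤ n ∧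
    ∀ i j : Fin n, r ≤ (i : ℕ) → (i : ℕ) < r + m → c ≤ (j : ℕ) → (j : ℕ) < c + m →
      (i, j) ∈ Q

def avoids2143 {n : ℕ} (v : Equiv.Perm (Fin n)) : Prop :=
  ¬ ∃ a b c d : Fin n, a < b ∧ b < c ∧ c < d ∧ v b < v a ∧ v a < v d ∧ v d < v c

def avoids123 {n : ℕ} (v : Equiv.Perm (Fin n)) : Prop :=
  ¬ ∃ a b c : Fin n, a < b ∧ b < c ∧ v a < v b ∧ v b < v c

def avoids1432 {n : ℕ} (v : Equiv.Perm (Fin n)) : Prop :=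
  ¬ ∃ a b c d : Fin n, a < b ∧ b < c ∧ c < d ∧ v a < v d ∧ v d < v c ∧ v c < v b

def avoids3214 {n : ℕ} (v : Equiv.Perm (Fin n)) : Prop :=
  ¬ ∃ a b c d : Fin n, a < b ∧ b < c ∧ c < d ∧ v c < v b ∧ v b < v a ∧ v a < v d


section Aux
variable {n : ℕ}

lemma bruhatLE_refl (v : Perm (Fin n)) : bruhatLE v v := fun _ _ => le_refl _

lemma bruhatLE_trans {u v w : Perm (Fin n)} (h1 : bruhatLE u v) (h2 : bruhatLE v w) :
    bruhatLE u w := fun i j => (h1 i j).trans (h2 i j)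

lemma card_filter_comp (v : Perm (Fin n)) (p : Fin n → Prop) [DecidablePred p] :
    (univ.filter fun k => p (v k)).card = (univ.filter p).card := by
  rw [← Finset.card_map ⟨v, v.injective⟩]
  congr 1
  ext x
  simp only [Finset.mem_map, Finset.mem_filter, Finset.mem_univ, true_and,
    Function.Embedding.coeFn_mk]
  constructor
  · rintro ⟨a, ha, rfl⟩; exact ha
  · intro hx; exact ⟨v.symm x, by simpa using hx, by simp⟩

lemma bruhatLE_top (u : Perm (Fin n)) : bruhatLE u Fin.revPerm := by
  intro i j
  have hR : (univ.filter fun k => k ≤ i ∧ j ≤ Fin.revPerm k) = Finset.Iic (min i j.rev) := by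
    ext k
    simp only [Finset.mem_filter, Finset.mem_univ, true_and, Finset.mem_Iic, le_min_iff]
    constructor
    · rintro ⟨h1, h2⟩
      refine ⟨h1, ?_⟩
      have : Fin.revPerm k = k.rev := rfl
      rw [this] at h2
      have := Fin.rev_le_rev.mpr h2
      simpa using this
    · rintro ⟨h1, h2⟩
      refine ⟨h1, ?_⟩
      show j ≤ k.rev
      have := Fin.rev_le_rev.mpr h2
      simpa using this
  rw [hR, Fin.card_Iic]
  have hle1 : (univ.filter fun k => k ≤ i ∧ j ≤ u k).card ≤ (i : ℕ) + 1 := by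
    have : (univ.filter fun k => k ≤ i ∧ j ≤ u k) ⊆ Finset.Iic i := by
      intro k hk
      simp only [Finset.mem_filter] at hk
      exact Finset.mem_Iic.mpr hk.2.1
    simpa [Fin.card_Iic] using Finset.card_le_card this
  have hle2 : (univ.filter fun k => k ≤ i ∧ j ≤ u k).card ≤ n - (j : ℕ) := by
    have hsub : (univ.filter fun k => k ≤ i ∧ j ≤ u k) ⊆ (univ.filter fun k => j ≤ u k) := by
      intro k hk
      simp only [Finset.mem_filter] at hk ⊢
      exact ⟨hk.1, hk.2.2⟩
    have := Finset.card_le_card hsub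
    rw [card_filter_comp u (fun x => j ≤ x)] at this
    have : (univ.filter fun x => j ≤ x) = Finset.Ici j := by
      ext x; simp
    calc (univ.filter fun k => k ≤ i ∧ j ≤ u k).card
        ≤ (univ.filter fun x : Fin n => j ≤ x).card := by
          rw [← card_filter_comp u (fun x => j ≤ x)]; exact Finset.card_le_card hsub
      _ = (Finset.Ici j).card := by rw [this]
      _ = n - (j : ℕ) := Fin.card_Ici j
  have hrev : (j.rev : ℕ) = n - 1 - (j : ℕ) := Fin.val_rev j ▸ by omega
  have hj : (j : ℕ) < n := j.isLt
  have : (↑(min i j.rev) : ℕ) = min (i : ℕ) (j.rev : ℕ) := rfl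
  omega

lemma bruhatLE_mul_swap (v : Perm (Fin n)) {k l : Fin n} (hkl : k < l) (hv : v k < v l) :
    bruhatLE v (v * Equiv.swap k l) := by
  intro i j
  by_cases hl : l ≤ i
  · apply Finset.card_le_card_of_injOn (fun m => Equiv.swap k l m)
    · intro m hm
      simp only [Finset.mem_coe, Finset.mem_filter, Finset.mem_univ, true_and] at hm ⊢
      refine ⟨?_, ?_⟩
      · rcases eq_or_ne m k with rfl | hk
        · simpa [Equiv.swap_apply_left] using hl
        rcases eq_or_ne m l with rfl | hl'
        · simpa [Equiv.swap_apply_right] using (le_of_lt hkl).trans hl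
        · rw [Equiv.swap_apply_of_ne_of_ne hk hl']; exact hm.1
      · show j ≤ (v * Equiv.swap k l) (Equiv.swap k l m)
        rw [Equiv.Perm.mul_apply, Equiv.swap_apply_self]
        exact hm.2
    · exact (Equiv.swap k l).injective.injOn
  · apply Finset.card_le_card
    intro m hm
    simp only [Finset.mem_filter, Finset.mem_univ, true_and] at hm ⊢
    refine ⟨hm.1, ?_⟩
    have hml : m ≠ l := fun h => hl (h ▸ hm.1)
    rcases eq_or_ne m k with rfl | hk
    · rw [Equiv.Perm.mul_apply, Equiv.swap_apply_left]
      exact hm.2.trans (le_of_lt hv)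
    · rw [Equiv.Perm.mul_apply, Equiv.swap_apply_of_ne_of_ne hk hml]
      exact hm.2

lemma exists_le_of_bruhat {v u : Perm (Fin n)} (hvu : bruhatLE v u) (i : Fin n) :
    ∃ k, k ≤ i ∧ v k ≤ u i := by
  by_contra hc
  push_neg at hc
  have hvi : u i < v i := hc i le_rfl
  have hlt : ((u i : ℕ)) + 1 < n := by
    have := hvi
    rw [Fin.lt_def] at this
    have := (v i).isLt
    omega
  set j' : Fin n := ⟨(u i : ℕ) + 1, by omega⟩ with hj'
  have h := hvu i j'
  have hL : (univ.filter fun k => k ≤ i ∧ j' ≤ v k) = Finset.Iic i := by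
    ext k
    simp only [Finset.mem_filter, Finset.mem_univ, true_and, Finset.mem_Iic]
    refine ⟨fun h => h.1, fun hk => ⟨hk, ?_⟩⟩
    have := hc k hk
    rw [Fin.lt_def] at this
    rw [Fin.le_def]
    exact Nat.succ_le_of_lt this
  have hR : (univ.filter fun k => k ≤ i ∧ j' ≤ u k) ⊆ (Finset.Iic i).erase i := by
    intro k hk
    simp only [Finset.mem_filter, Finset.mem_univ, true_and] at hk
    rw [Finset.mem_erase, Finset.mem_Iic]
    refine ⟨?_, hk.1⟩
    rintro rfl
    have := hk.2
    rw [Fin.le_def] at this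
    simp [hj'] at this
  have hcard := Finset.card_le_card hR
  rw [hL] at h
  rw [Fin.card_Iic] at h
  have h2 : ((Finset.Iic i).erase i).card = (i : ℕ) := by
    rw [Finset.card_erase_of_mem (Finset.mem_Iic.mpr le_rfl), Fin.card_Iic]
    omega
  omega

lemma exists_ge_of_bruhat {v u : Perm (Fin n)} (hvu : bruhatLE v u) (i : Fin n) :
    ∃ l, i ≤ l ∧ u i ≤ v l := by
  by_contra hc
  push_neg at hc
  set j := u i with hj
  have hmi : v.symm j < i := by
    by_contra hmi
    push_neg at hmi
    have := hc _ hmi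
    simp at this
  have hi0 : 0 < (i : ℕ) := by
    rcases Nat.eq_zero_or_pos (i : ℕ) with h0 | h
    · exfalso
      have : (v.symm j : ℕ) < (i : ℕ) := hmi
      omega
    · exact h
  set i' : Fin n := ⟨(i : ℕ) - 1, by have := i.isLt; omega⟩ with hi'
  have h := hvu i' j
  have hL : (univ.filter fun k => k ≤ i' ∧ j ≤ v k) = (univ.filter fun k => j ≤ v k) := by
    ext k
    simp only [Finset.mem_filter, Finset.mem_univ, true_and]
    refine ⟨fun h => h.2, fun hk => ⟨?_, hk⟩⟩
    have hki : k < i := by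
      by_contra hki
      push_neg at hki
      exact absurd hk (not_le.mpr (hc k hki))
    rw [Fin.le_def]
    rw [Fin.lt_def] at hki
    simp [hi']
    omega
  have hLcard : (univ.filter fun k => j ≤ v k).card = n - (j : ℕ) := by
    rw [card_filter_comp v (fun x => j ≤ x)]
    have : (univ.filter fun x : Fin n => j ≤ x) = Finset.Ici j := by ext x; simp
    rw [this, Fin.card_Ici]
  have hR : (univ.filter fun k => k ≤ i' ∧ j ≤ u k) ⊆ (univ.filter fun k => j ≤ u k).erase i := by
    intro k hk
    simp only [Finset.mem_filter, Finset.mem_univ, true_and] at hk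
    rw [Finset.mem_erase, Finset.mem_filter]
    refine ⟨?_, Finset.mem_univ k, hk.2⟩
    rintro rfl
    have := hk.1
    rw [Fin.le_def] at this
    simp [hi'] at this
    omega
  have hRcard : ((univ.filter fun k => j ≤ u k).erase i).card = n - (j : ℕ) - 1 := by
    rw [Finset.card_erase_of_mem]
    · rw [card_filter_comp u (fun x => j ≤ x)]
      have : (univ.filter fun x : Fin n => j ≤ x) = Finset.Ici j := by ext x; simp
      rw [this, Fin.card_Ici]
    · simp [hj]
  have hcard := Finset.card_le_card hR
  rw [hL, hLcard] at h
  rw [hRcard] at hcard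
  have : (j : ℕ) < n := j.isLt
  omega

lemma mem_grInt_iff (v : Perm (Fin n)) (i j : Fin n) :
    (i, j) ∈ grInt v Fin.revPerm ↔
      (∃ k, k ≤ i ∧ v k ≤ j) ∧ (∃ l, i ≤ l ∧ j ≤ v l) := by
  constructor
  · rintro ⟨u, hvu, -, hui⟩
    have hui' : u i = j := hui
    constructor
    · rcases exists_le_of_bruhat hvu i with ⟨k, h1, h2⟩
      exact ⟨k, h1, hui' ▸ h2⟩
    · rcases exists_ge_of_bruhat hvu i with ⟨l, h1, h2⟩
      exact ⟨l, h1, hui' ▸ h2⟩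
  · rintro ⟨⟨k, hki, hvk⟩, ⟨l, hil, hvl⟩⟩
    rcases eq_or_ne (v i) j with hvij | hvij
    · exact ⟨v, bruhatLE_refl v, bruhatLE_top v, hvij⟩
    set m := v.symm j with hm
    have hvm : v m = j := v.apply_symm_apply j
    have hmi : m ≠ i := fun h => hvij (h ▸ hvm)
    rcases hmi.lt_or_gt with hlt | hlt
    · -- m < i
      rcases lt_or_ge j (v i) with hji | hji
      · -- one swap: (m, i) non-inversion
        refine ⟨v * Equiv.swap m i, bruhatLE_mul_swap v hlt (hvm ▸ hji), bruhatLE_top _, ?_⟩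
        show (v * Equiv.swap m i) i = j
        rw [Equiv.Perm.mul_apply, Equiv.swap_apply_right, hvm]
      · -- v i < j : use l, two swaps
        have hji' : v i < j := lt_of_le_of_ne hji hvij
        have hil' : i < l := by
          rcases eq_or_ne i l with rfl | hne
          · exact absurd hvl (not_le.mpr hji')
          · exact lt_of_le_of_ne hil hne
        have hml : m < l := hlt.trans hil'
        have hjl : j < v l := by
          rcases eq_or_ne j (v l) with heq | hne
          · exfalso
            have : m = l := v.injective (by rw [hvm, heq])
            exact absurd this hml.ne
          · exact lt_of_le_of_ne hvl hne
        set u1 := v * Equiv.swap i l with hu1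
        have hb1 : bruhatLE v u1 := bruhatLE_mul_swap v hil' (hji'.trans hjl)
        have hu1m : u1 m = j := by
          rw [hu1, Equiv.Perm.mul_apply, Equiv.swap_apply_of_ne_of_ne hmi hml.ne, hvm]
        have hu1i : u1 i = v l := by
          rw [hu1, Equiv.Perm.mul_apply, Equiv.swap_apply_left]
        have hb2 : bruhatLE u1 (u1 * Equiv.swap m i) :=
          bruhatLE_mul_swap u1 hlt (by rw [hu1m, hu1i]; exact hjl)
        refine ⟨u1 * Equiv.swap m i, bruhatLE_trans hb1 hb2, bruhatLE_top _, ?_⟩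
        show (u1 * Equiv.swap m i) i = j
        rw [Equiv.Perm.mul_apply, Equiv.swap_apply_right, hu1m]
    · -- i < m
      rcases lt_or_ge (v i) j with hji | hji
      · -- one swap: (i, m) non-inversion
        refine ⟨v * Equiv.swap i m, bruhatLE_mul_swap v hlt (hvm ▸ hji), bruhatLE_top _, ?_⟩
        show (v * Equiv.swap i m) i = j
        rw [Equiv.Perm.mul_apply, Equiv.swap_apply_left, hvm]
      · -- j < v i : use k, two swaps
        have hji' : j < v i := lt_of_le_of_ne hji (Ne.symm hvij)
        have hki' : k < i := by
          rcases eq_or_ne k i with rfl | hne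
          · exact absurd hvk (not_le.mpr hji')
          · exact lt_of_le_of_ne hki hne
        have hkm : k < m := hki'.trans hlt
        have hjk : v k < j := by
          rcases eq_or_ne (v k) j with heq | hne
          · exfalso
            have : k = m := v.injective (by rw [hvm, heq])
            exact absurd this hkm.ne
          · exact lt_of_le_of_ne hvk hne
        set u1 := v * Equiv.swap k i with hu1
        have hb1 : bruhatLE v u1 := bruhatLE_mul_swap v hki' (hjk.trans hji')
        have hu1m : u1 m = j := by
          rw [hu1, Equiv.Perm.mul_apply, Equiv.swap_apply_of_ne_of_ne hkm.ne' hmi, hvm]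
        have hu1i : u1 i = v k := by
          rw [hu1, Equiv.Perm.mul_apply, Equiv.swap_apply_right]
        have hb2 : bruhatLE u1 (u1 * Equiv.swap i m) :=
          bruhatLE_mul_swap u1 hlt (by rw [hu1m, hu1i]; exact hjk)
        refine ⟨u1 * Equiv.swap i m, bruhatLE_trans hb1 hb2, bruhatLE_top _, ?_⟩
        show (u1 * Equiv.swap i m) i = j
        rw [Equiv.Perm.mul_apply, Equiv.swap_apply_left, hu1m]

lemma hasSquare_iff_spread (v : Perm (Fin n)) :
    hasSquare (grInt v Fin.revPerm) 3 ↔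
      ∃ k l : Fin n, (k : ℕ) + 2 ≤ (l : ℕ) ∧ ((v k : ℕ)) + 2 ≤ ((v l : ℕ)) := by
  constructor
  · rintro ⟨r, c, hr, hc, hall⟩
    have h1 := hall ⟨r, by omega⟩ ⟨c, by omega⟩ (by simp) (by simp) (by simp) (by simp)
    have h2 := hall ⟨r + 2, by omega⟩ ⟨c + 2, by omega⟩ (by simp) (by simp) (by simp) (by simp)
    rw [mem_grInt_iff] at h1 h2
    obtain ⟨k, hk, hvk⟩ := h1.1
    obtain ⟨l, hl, hvl⟩ := h2.2
    refine ⟨k, l, ?_, ?_⟩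
    · have hk' : (k : ℕ) ≤ r := hk
      have hl' : r + 2 ≤ (l : ℕ) := hl
      omega
    · have hk' : (v k : ℕ) ≤ c := hvk
      have hl' : c + 2 ≤ (v l : ℕ) := hvl
      omega
  · rintro ⟨k, l, h1, h2⟩
    refine ⟨(k : ℕ), (v k : ℕ), by have := l.isLt; omega, by have := (v l).isLt; omega, ?_⟩
    intro i j hi1 hi2 hj1 hj2
    rw [mem_grInt_iff]
    constructor
    · exact ⟨k, by rw [Fin.le_def]; omega, by rw [Fin.le_def]; omega⟩
    · exact ⟨l, by rw [Fin.le_def]; omega, by rw [Fin.le_def]; omega⟩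

lemma no_spread_of_avoids (v : Perm (Fin n)) (h2143 : avoids2143 v)
    (h123 : avoids123 v) (h1432 : avoids1432 v) (h3214 : avoids3214 v) :
    ¬ ∃ k l : Fin n, (k : ℕ) + 2 ≤ (l : ℕ) ∧ ((v k : ℕ)) + 2 ≤ ((v l : ℕ)) := by
  rintro ⟨k, l, h1, h2⟩
  have hkl : k < l := by rw [Fin.lt_def]; omega
  have hvkl : v k < v l := by rw [Fin.lt_def]; omega
  set m : Fin n := ⟨(k : ℕ) + 1, by have := l.isLt; omega⟩ with hmdef
  have hkm : k < m := by rw [Fin.lt_def]; simp [hmdef]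
  have hml : m < l := by rw [Fin.lt_def]; simp [hmdef]; omega
  set x : Fin n := ⟨(v k : ℕ) + 1, by have := (v l).isLt; omega⟩ with hxdef
  have hxval : (x : ℕ) = (v k : ℕ) + 1 := rfl
  have hvkx : v k < x := by rw [Fin.lt_def]; omega
  have hxvl : x < v l := by rw [Fin.lt_def]; omega
  set q : Fin n := v.symm x with hqdef
  have hvq : v q = x := v.apply_symm_apply x
  have hqk : q ≠ k := fun h => absurd (h ▸ hvq) hvkx.ne
  have hql : q ≠ l := fun h => absurd (h ▸ hvq) hxvl.ne'
  have hmk : m ≠ k := hkm.ne'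
  -- trichotomy on v m
  have hvmk : v m ≠ v k := fun h => hmk (v.injective h)
  have hvml : v m ≠ v l := fun h => hml.ne (v.injective h)
  rcases lt_trichotomy (v m) (v k) with hA | hA
  · -- v m < v k
    have hqm : q ≠ m := fun h => absurd (h ▸ hvq) (by intro he; rw [← he] at hvkx; exact absurd (hA.trans hvkx) (lt_irrefl _))
    rcases lt_trichotomy q k with hB | hB | hB
    · -- 3214 at (q, k, m, l)
      exact h3214 ⟨q, k, m, l, hB, hkm, hml, hA, hvq ▸ hvkx, hvq ▸ hxvl⟩
    · exact absurd hB hqk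
    · rcases lt_trichotomy q l with hC | hC | hC
      · -- k < q < l : 123 at (k, q, l)
        exact h123 ⟨k, q, l, hB, hC, hvq ▸ hvkx, hvq ▸ hxvl⟩
      · exact absurd hC hql
      · -- q > l : 2143 at (k, m, l, q)
        exact h2143 ⟨k, m, l, q, hkm, hml, hC, hA, hvq ▸ hvkx, hvq ▸ hxvl⟩
  · rcases hA with hA | hA
    · exact absurd hA hvmk
    rcases lt_trichotomy (v m) (v l) with hD | hD | hD
    · -- v k < v m < v l : 123 at (k, m, l)
      exact h123 ⟨k, m, l, hkm, hml, hA, hD⟩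
    · exact absurd hD hvml
    · -- v m > v l
      have hqm : q ≠ m := fun h => absurd (h ▸ hvq) (by intro he; rw [← he] at hxvl; exact absurd (hxvl.trans hD) (lt_irrefl _))
      rcases lt_trichotomy q k with hB | hB | hB
      · -- 2143 at (q, k, m, l)
        exact h2143 ⟨q, k, m, l, hB, hkm, hml, hvq ▸ hvkx, hvq ▸ hxvl, hD⟩
      · exact absurd hB hqk
      · rcases lt_trichotomy q l with hC | hC | hC
        · exact h123 ⟨k, q, l, hB, hC, hvq ▸ hvkx, hvq ▸ hxvl⟩
        · exact absurd hC hql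
        · -- 1432 at (k, m, l, q)
          exact h1432 ⟨k, m, l, q, hkm, hml, hC, hvq ▸ hvkx, hvq ▸ hxvl, hD⟩

lemma spread_of_pattern (v : Perm (Fin n))
    (hp : (¬ avoids123 v) ∨ (¬ avoids1432 v) ∨ (¬ avoids3214 v)) :
    ∃ k l : Fin n, (k : ℕ) + 2 ≤ (l : ℕ) ∧ ((v k : ℕ)) + 2 ≤ ((v l : ℕ)) := by
  rcases hp with hp | hp | hp
  · rw [avoids123, not_not] at hp
    obtain ⟨a, b, c, hab, hbc, h1, h2⟩ := hp
    refine ⟨a, c, ?_, ?_⟩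
    · rw [Fin.lt_def] at hab hbc; omega
    · rw [Fin.lt_def] at h1 h2; omega
  · rw [avoids1432, not_not] at hp
    obtain ⟨a, b, c, d, hab, hbc, hcd, h1, h2, h3⟩ := hp
    refine ⟨a, c, ?_, ?_⟩
    · rw [Fin.lt_def] at hab hbc; omega
    · rw [Fin.lt_def] at h1 h2; omega
  · rw [avoids3214, not_not] at hp
    obtain ⟨a, b, c, d, hab, hbc, hcd, h1, h2, h3⟩ := hp
    refine ⟨b, d, ?_, ?_⟩
    · rw [Fin.lt_def] at hbc hcd; omega
    · rw [Fin.lt_def] at h1 h2 h3; omega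

end Aux

/-- For `v` avoiding 2143: `Γ([v, w₀])` contains no `3 × 3` square region iff
`v` avoids 123, 1432, and 3214. -/
theorem no_three_square_iff_avoids {n : ℕ} (v : Equiv.Perm (Fin n))
    (h : avoids2143 v) :
    ¬ hasSquare (grInt v Fin.revPerm) 3 ↔
      avoids123 v ∧ avoids1432 v ∧ avoids3214 v := by
  rw [hasSquare_iff_spread]
  constructor
  · intro hns
    refine ⟨?_, ?_, ?_⟩ <;> by_contra hc
    · exact hns (spread_of_pattern v (Or.inl hc))
    · exact hns (spread_of_pattern v (Or.inr (Or.inl hc)))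
    · exact hns (spread_of_pattern v (Or.inr (Or.inr hc)))
  · rintro ⟨h123, h1432, h3214⟩
    exact no_spread_of_avoids v h h123 h1432 h3214
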